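/- Let X be a finite set and consider the semigroup of bi-typed partial maps on X with the domain-restricting composition. For disjoint subsets A = (A_ex, A_fr) and B = (B_ex, B_fr) of X, the partial identities id_A and id_B are 𝒟-related if and only if there exists a bijection ψ : (A_ex ∪ A_fr) → (B_ex ∪ B_fr) with ψ(A_ex) = B_ex and ψ(A_fr) = B_fr; in particular, if id_A 𝒟 id_B then |A_ex| = |B_ex| and |A_fr| = |B_fr|. -/

import Mathlib

open scoped Classical

structure BiMap (X : Type*) where
  ex : Set X
  fr : Set X
  disj : ex ∩ fr = ∅
  toFun : X → X
  eq_outside : ∀ x, x ∉ ex ∪ fr → toFun x = x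

noncomputable def BiMap.comp {X : Type*} (g f : BiMap X) : BiMap X where
  ex := {x | x ∈ f.ex ∧ f.toFun x ∈ g.ex}
  fr := {x | x ∈ f.fr ∧ f.toFun x ∈ g.fr}
  disj := by
    ext x
    constructor
    · rintro ⟨⟨h1, _⟩, h2, _⟩
      have hx : x ∈ f.ex ∩ f.fr := ⟨h1, h2⟩
      rw [f.disj] at hx
      exact hx
    · intro hx
      exact absurd hx (Set.notMem_empty x)
  toFun := fun x =>
    if (x ∈ f.ex ∧ f.toFun x ∈ g.ex) ∨ (x ∈ f.fr ∧ f.toFun x ∈ g.fr) then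
      g.toFun (f.toFun x)
    else x
  eq_outside := by
    intro x hx
    exact if_neg (fun hc => hx (by simpa using hc))

def BiMap.pid {X : Type*} (Aex Afr : Set X) (h : Aex ∩ Afr = ∅) : BiMap X :=
  ⟨Aex, Afr, h, id, fun _ _ => rfl⟩

def BiMap.glL {X : Type*} (f g : BiMap X) : Prop :=
  ({h | ∃ s, h = BiMap.comp s f} ∪ {f}) = ({h | ∃ s, h = BiMap.comp s g} ∪ {g})

def BiMap.glR {X : Type*} (f g : BiMap X) : Prop :=
  ({h | ∃ s, h = BiMap.comp f s} ∪ {f}) = ({h | ∃ s, h = BiMap.comp g s} ∪ {g})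

def BiMap.glD {X : Type*} (f g : BiMap X) : Prop :=
  ∃ h, BiMap.glL f h ∧ BiMap.glR h g

namespace BiMap

variable {X : Type*}

theorem bext {f g : BiMap X} (h1 : f.ex = g.ex) (h2 : f.fr = g.fr)
    (h3 : f.toFun = g.toFun) : f = g := by
  cases f; cases g; simp_all

theorem comp_ex (g f : BiMap X) :
    (comp g f).ex = {x | x ∈ f.ex ∧ f.toFun x ∈ g.ex} := rfl

theorem comp_fr (g f : BiMap X) :
    (comp g f).fr = {x | x ∈ f.fr ∧ f.toFun x ∈ g.fr} := rfl

theorem comp_toFun (g f : BiMap X) (x : X) :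
    (comp g f).toFun x =
      if (x ∈ f.ex ∧ f.toFun x ∈ g.ex) ∨ (x ∈ f.fr ∧ f.toFun x ∈ g.fr) then
        g.toFun (f.toFun x) else x := rfl

set_option maxHeartbeats 1000000 in
theorem comp_assoc (a b c : BiMap X) : comp (comp a b) c = comp a (comp b c) := by
  apply bext
  · ext x
    simp only [comp_ex, Set.mem_setOf_eq, comp_toFun]
    constructor
    · rintro ⟨h1, h2, h3⟩
      exact ⟨⟨h1, h2⟩, by rw [if_pos (Or.inl ⟨h1, h2⟩)]; exact h3⟩
    · rintro ⟨⟨h1, h2⟩, h3⟩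
      rw [if_pos (Or.inl ⟨h1, h2⟩)] at h3
      exact ⟨h1, h2, h3⟩
  · ext x
    simp only [comp_fr, Set.mem_setOf_eq, comp_toFun]
    constructor
    · rintro ⟨h1, h2, h3⟩
      exact ⟨⟨h1, h2⟩, by rw [if_pos (Or.inr ⟨h1, h2⟩)]; exact h3⟩
    · rintro ⟨⟨h1, h2⟩, h3⟩
      rw [if_pos (Or.inr ⟨h1, h2⟩)] at h3
      exact ⟨h1, h2, h3⟩
  · funext x
    simp only [comp_toFun, comp_ex, comp_fr, Set.mem_setOf_eq]
    split_ifs <;> tauto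

theorem glL_of {f g a b : BiMap X} (h1 : f = comp a g) (h2 : g = comp b f) :
    glL f g := by
  unfold glL
  ext k
  simp only [Set.mem_union, Set.mem_setOf_eq, Set.mem_singleton_iff]
  constructor
  · rintro (⟨s, rfl⟩ | rfl)
    · exact Or.inl ⟨comp s a, by rw [h1, ← comp_assoc]⟩
    · exact Or.inl ⟨a, h1⟩
  · rintro (⟨s, rfl⟩ | rfl)
    · exact Or.inl ⟨comp s b, by rw [h2, ← comp_assoc]⟩
    · exact Or.inl ⟨b, h2⟩

theorem glR_of {f g u v : BiMap X} (h1 : f = comp g u) (h2 : g = comp f v) :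
    glR f g := by
  unfold glR
  ext k
  simp only [Set.mem_union, Set.mem_setOf_eq, Set.mem_singleton_iff]
  constructor
  · rintro (⟨s, rfl⟩ | rfl)
    · exact Or.inl ⟨comp u s, by rw [h1, comp_assoc]⟩
    · exact Or.inl ⟨u, h1⟩
  · rintro (⟨s, rfl⟩ | rfl)
    · exact Or.inl ⟨comp v s, by rw [h2, comp_assoc]⟩
    · exact Or.inl ⟨v, h2⟩

theorem glL_dest {f g : BiMap X} (h : glL f g) :
    (f = g ∨ ∃ s, f = comp s g) ∧ (g = f ∨ ∃ s, g = comp s f) := by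
  unfold glL at h
  have hf : f ∈ ({k | ∃ s, k = comp s g} ∪ {g} : Set (BiMap X)) := by
    rw [← h]; exact Set.mem_union_right _ rfl
  have hg : g ∈ ({k | ∃ s, k = comp s f} ∪ {f} : Set (BiMap X)) := by
    rw [h]; exact Set.mem_union_right _ rfl
  constructor
  · rcases hf with ⟨s, hs⟩ | hf
    · exact Or.inr ⟨s, hs⟩
    · exact Or.inl hf
  · rcases hg with ⟨s, hs⟩ | hg
    · exact Or.inr ⟨s, hs⟩
    · exact Or.inl hg

theorem glR_dest {f g : BiMap X} (h : glR f g) :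
    (f = g ∨ ∃ s, f = comp g s) ∧ (g = f ∨ ∃ s, g = comp f s) := by
  unfold glR at h
  have hf : f ∈ ({k | ∃ s, k = comp g s} ∪ {g} : Set (BiMap X)) := by
    rw [← h]; exact Set.mem_union_right _ rfl
  have hg : g ∈ ({k | ∃ s, k = comp f s} ∪ {f} : Set (BiMap X)) := by
    rw [h]; exact Set.mem_union_right _ rfl
  constructor
  · rcases hf with ⟨s, hs⟩ | hf
    · exact Or.inr ⟨s, hs⟩
    · exact Or.inl hf
  · rcases hg with ⟨s, hs⟩ | hg
    · exact Or.inr ⟨s, hs⟩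
    · exact Or.inl hg

end BiMap

namespace BiMap

variable {X : Type*}

theorem glL_pid {Aex Afr : Set X} {hA : Aex ∩ Afr = ∅} {h : BiMap X}
    (hL : glL (pid Aex Afr hA) h) :
    h.ex = Aex ∧ h.fr = Afr ∧ Set.InjOn h.toFun (Aex ∪ Afr) := by
  obtain ⟨h1, h2⟩ := glL_dest hL
  rcases h1 with heq | ⟨s, hs⟩
  · rw [← heq]
    exact ⟨rfl, rfl, fun x _ y _ hxy => hxy⟩
  rcases h2 with heq | ⟨t, ht⟩
  · rw [heq]
    exact ⟨rfl, rfl, fun x _ y _ hxy => hxy⟩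
  have eex : (pid Aex Afr hA).ex = (comp s h).ex := congrArg BiMap.ex hs
  have efr : (pid Aex Afr hA).fr = (comp s h).fr := congrArg BiMap.fr hs
  have hexA : h.ex = Aex := by
    apply Set.Subset.antisymm
    · intro x hx
      have hx' : x ∈ (comp t (pid Aex Afr hA)).ex := ht ▸ hx
      exact hx'.1
    · intro x hx
      have hx' : x ∈ (comp s h).ex := by rw [← eex]; exact hx
      exact hx'.1
  have hfrA : h.fr = Afr := by
    apply Set.Subset.antisymm
    · intro x hx
      have hx' : x ∈ (comp t (pid Aex Afr hA)).fr := ht ▸ hx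
      exact hx'.1
    · intro x hx
      have hx' : x ∈ (comp s h).fr := by rw [← efr]; exact hx
      exact hx'.1
  refine ⟨hexA, hfrA, ?_⟩
  have key : ∀ x ∈ Aex ∪ Afr, s.toFun (h.toFun x) = x := by
    intro x hx
    have hfx : (pid Aex Afr hA).toFun x = (comp s h).toFun x :=
      congrFun (congrArg BiMap.toFun hs) x
    rcases hx with hx | hx
    · have hc : x ∈ h.ex ∧ h.toFun x ∈ s.ex := by
        have hm : x ∈ (comp s h).ex := by rw [← eex]; exact hx
        exact hm
      rw [comp_toFun, if_pos (Or.inl hc)] at hfx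
      exact hfx.symm
    · have hc : x ∈ h.fr ∧ h.toFun x ∈ s.fr := by
        have hm : x ∈ (comp s h).fr := by rw [← efr]; exact hx
        exact hm
      rw [comp_toFun, if_pos (Or.inr hc)] at hfx
      exact hfx.symm
  intro x hx y hy hxy
  rw [← key x hx, ← key y hy, hxy]

theorem glR_pid {Bex Bfr : Set X} {hB : Bex ∩ Bfr = ∅} {h : BiMap X}
    (hR : glR h (pid Bex Bfr hB)) :
    h.toFun '' h.ex = Bex ∧ h.toFun '' h.fr = Bfr := by
  obtain ⟨h1, h2⟩ := glR_dest hR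
  rcases h1 with heq | ⟨u, hu⟩
  · rw [heq]
    exact ⟨Set.image_id _, Set.image_id _⟩
  rcases h2 with heq | ⟨v, hv⟩
  · rw [← heq]
    exact ⟨Set.image_id _, Set.image_id _⟩
  have evex : (pid Bex Bfr hB).ex = (comp h v).ex := congrArg BiMap.ex hv
  have evfr : (pid Bex Bfr hB).fr = (comp h v).fr := congrArg BiMap.fr hv
  constructor
  · apply Set.Subset.antisymm
    · rintro y ⟨x, hx, rfl⟩
      have hx0 : x ∈ (comp (pid Bex Bfr hB) u).ex := hu ▸ hx
      have hx' : x ∈ u.ex ∧ u.toFun x ∈ (pid Bex Bfr hB).ex := hx0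
      have hfx : h.toFun x = (comp (pid Bex Bfr hB) u).toFun x :=
        congrFun (congrArg BiMap.toFun hu) x
      rw [comp_toFun, if_pos (Or.inl hx')] at hfx
      rw [hfx]
      exact hx'.2
    · intro y hy
      have hy0 : y ∈ (comp h v).ex := by rw [← evex]; exact hy
      have hy' : y ∈ v.ex ∧ v.toFun y ∈ h.ex := hy0
      have hfy : (pid Bex Bfr hB).toFun y = (comp h v).toFun y :=
        congrFun (congrArg BiMap.toFun hv) y
      rw [comp_toFun, if_pos (Or.inl hy')] at hfy
      exact ⟨v.toFun y, hy'.2, hfy.symm⟩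
  · apply Set.Subset.antisymm
    · rintro y ⟨x, hx, rfl⟩
      have hx0 : x ∈ (comp (pid Bex Bfr hB) u).fr := hu ▸ hx
      have hx' : x ∈ u.fr ∧ u.toFun x ∈ (pid Bex Bfr hB).fr := hx0
      have hfx : h.toFun x = (comp (pid Bex Bfr hB) u).toFun x :=
        congrFun (congrArg BiMap.toFun hu) x
      rw [comp_toFun, if_pos (Or.inr hx')] at hfx
      rw [hfx]
      exact hx'.2
    · intro y hy
      have hy0 : y ∈ (comp h v).fr := by rw [← evfr]; exact hy
      have hy' : y ∈ v.fr ∧ v.toFun y ∈ h.fr := hy0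
      have hfy : (pid Bex Bfr hB).toFun y = (comp h v).toFun y :=
        congrFun (congrArg BiMap.toFun hv) y
      rw [comp_toFun, if_pos (Or.inr hy')] at hfy
      exact ⟨v.toFun y, hy'.2, hfy.symm⟩

end BiMap

namespace BiMap

variable {X : Type*}

theorem glD_pid_of {Aex Afr Bex Bfr : Set X} (hA : Aex ∩ Afr = ∅) (hB : Bex ∩ Bfr = ∅)
    (h s : BiMap X)
    (hhex : h.ex = Aex) (hhfr : h.fr = Afr)
    (hsex : s.ex = Bex) (hsfr : s.fr = Bfr)
    (hm1 : ∀ x ∈ Aex, h.toFun x ∈ Bex)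
    (hm2 : ∀ x ∈ Afr, h.toFun x ∈ Bfr)
    (hls : ∀ x ∈ Aex ∪ Afr, s.toFun (h.toFun x) = x)
    (hr1 : ∀ y ∈ Bex, s.toFun y ∈ Aex ∧ h.toFun (s.toFun y) = y)
    (hr2 : ∀ y ∈ Bfr, s.toFun y ∈ Afr ∧ h.toFun (s.toFun y) = y) :
    glD (pid Aex Afr hA) (pid Bex Bfr hB) := by
  have e1 : h = comp h (pid Aex Afr hA) := by
    apply bext
    · ext x
      exact ⟨fun hx => ⟨hhex ▸ hx, hx⟩, fun hx => hx.2⟩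
    · ext x
      exact ⟨fun hx => ⟨hhfr ▸ hx, hx⟩, fun hx => hx.2⟩
    · funext x
      by_cases hx : x ∈ Aex ∪ Afr
      · rcases hx with hx | hx
        · rw [comp_toFun, if_pos (Or.inl ⟨hx, show x ∈ h.ex from hhex.symm ▸ hx⟩)]; rfl
        · rw [comp_toFun, if_pos (Or.inr ⟨hx, show x ∈ h.fr from hhfr.symm ▸ hx⟩)]; rfl
      · rw [comp_toFun, if_neg]
        · exact h.eq_outside x (by rw [hhex, hhfr]; exact hx)
        · rintro (⟨c1, -⟩ | ⟨c1, -⟩)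
          · exact hx (Or.inl c1)
          · exact hx (Or.inr c1)
  have e2 : pid Aex Afr hA = comp s h := by
    apply bext
    · ext x
      refine ⟨fun hx => ⟨hhex.symm ▸ hx, hsex.symm ▸ hm1 x hx⟩, fun hx => hhex ▸ hx.1⟩
    · ext x
      refine ⟨fun hx => ⟨hhfr.symm ▸ hx, hsfr.symm ▸ hm2 x hx⟩, fun hx => hhfr ▸ hx.1⟩
    · funext x
      by_cases hx : x ∈ Aex ∪ Afr
      · rcases hx with hx | hx
        · rw [comp_toFun,
            if_pos (Or.inl ⟨show x ∈ h.ex from hhex.symm ▸ hx,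
              show h.toFun x ∈ s.ex from hsex.symm ▸ hm1 x hx⟩),
            hls x (Or.inl hx)]
          rfl
        · rw [comp_toFun,
            if_pos (Or.inr ⟨show x ∈ h.fr from hhfr.symm ▸ hx,
              show h.toFun x ∈ s.fr from hsfr.symm ▸ hm2 x hx⟩),
            hls x (Or.inr hx)]
          rfl
      · rw [comp_toFun, if_neg]
        · rfl
        · rintro (⟨c1, -⟩ | ⟨c1, -⟩)
          · exact hx (Or.inl (hhex ▸ c1))
          · exact hx (Or.inr (hhfr ▸ c1))
  have e3 : h = comp (pid Bex Bfr hB) h := by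
    apply bext
    · ext x
      exact ⟨fun hx => ⟨hx, hm1 x (hhex ▸ hx)⟩, fun hx => hx.1⟩
    · ext x
      exact ⟨fun hx => ⟨hx, hm2 x (hhfr ▸ hx)⟩, fun hx => hx.1⟩
    · funext x
      by_cases hx : x ∈ h.ex ∪ h.fr
      · rcases hx with hx | hx
        · rw [comp_toFun, if_pos (Or.inl ⟨hx, show h.toFun x ∈ Bex from hm1 x (hhex ▸ hx)⟩)]; rfl
        · rw [comp_toFun, if_pos (Or.inr ⟨hx, show h.toFun x ∈ Bfr from hm2 x (hhfr ▸ hx)⟩)]; rfl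
      · rw [comp_toFun, if_neg]
        · exact h.eq_outside x hx
        · rintro (⟨c1, -⟩ | ⟨c1, -⟩)
          · exact hx (Or.inl c1)
          · exact hx (Or.inr c1)
  have e4 : pid Bex Bfr hB = comp h s := by
    apply bext
    · ext y
      refine ⟨fun hy => ⟨hsex.symm ▸ hy, hhex.symm ▸ (hr1 y hy).1⟩,
        fun hy => hsex ▸ hy.1⟩
    · ext y
      refine ⟨fun hy => ⟨hsfr.symm ▸ hy, hhfr.symm ▸ (hr2 y hy).1⟩,
        fun hy => hsfr ▸ hy.1⟩
    · funext y
      by_cases hy : y ∈ Bex ∪ Bfr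
      · rcases hy with hy | hy
        · rw [comp_toFun,
            if_pos (Or.inl ⟨show y ∈ s.ex from hsex.symm ▸ hy,
              show s.toFun y ∈ h.ex from hhex.symm ▸ (hr1 y hy).1⟩),
            (hr1 y hy).2]
          rfl
        · rw [comp_toFun,
            if_pos (Or.inr ⟨show y ∈ s.fr from hsfr.symm ▸ hy,
              show s.toFun y ∈ h.fr from hhfr.symm ▸ (hr2 y hy).1⟩),
            (hr2 y hy).2]
          rfl
      · rw [comp_toFun, if_neg]
        · rfl
        · rintro (⟨c1, -⟩ | ⟨c1, -⟩)
          · exact hy (Or.inl (hsex ▸ c1))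
          · exact hy (Or.inr (hsfr ▸ c1))
  exact ⟨h, glL_of e2 e1, glR_of e3 e4⟩

end BiMap

/-- Two partial identities are 𝒟-related iff there is a type-preserving bijection between
their domains; in particular 𝒟-related partial identities have domains of equal sizes. -/
theorem BiMap.pid_D_iff_bijection {X : Type*} [Finite X]
    (Aex Afr Bex Bfr : Set X) (hA : Aex ∩ Afr = ∅) (hB : Bex ∩ Bfr = ∅) :
    (BiMap.glD (BiMap.pid Aex Afr hA) (BiMap.pid Bex Bfr hB) ↔
      ∃ ψ : X → X, Set.BijOn ψ (Aex ∪ Afr) (Bex ∪ Bfr) ∧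
        ψ '' Aex = Bex ∧ ψ '' Afr = Bfr) ∧
    (BiMap.glD (BiMap.pid Aex Afr hA) (BiMap.pid Bex Bfr hB) →
      Aex.ncard = Bex.ncard ∧ Afr.ncard = Bfr.ncard) := by
  have main : BiMap.glD (BiMap.pid Aex Afr hA) (BiMap.pid Bex Bfr hB) ↔
      ∃ ψ : X → X, Set.BijOn ψ (Aex ∪ Afr) (Bex ∪ Bfr) ∧
        ψ '' Aex = Bex ∧ ψ '' Afr = Bfr := by
    constructor
    · rintro ⟨h, hL, hR⟩
      obtain ⟨hex, hfr, hinj⟩ := BiMap.glL_pid hL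
      obtain ⟨hBex, hBfr⟩ := BiMap.glR_pid hR
      have h1 : h.toFun '' Aex = Bex := by rw [← hex]; exact hBex
      have h2 : h.toFun '' Afr = Bfr := by rw [← hfr]; exact hBfr
      refine ⟨h.toFun, ⟨fun x hx => ?_, hinj, fun y hy => ?_⟩, h1, h2⟩
      · rcases hx with hx | hx
        · exact Or.inl (h1 ▸ Set.mem_image_of_mem _ hx)
        · exact Or.inr (h2 ▸ Set.mem_image_of_mem _ hx)
      · rw [Set.image_union, h1, h2]; exact hy
    · rintro ⟨ψ, hbij, h1, h2⟩
      rcases isEmpty_or_nonempty X with hE | hne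
      · have e : BiMap.pid Aex Afr hA = BiMap.pid Bex Bfr hB := by
          apply BiMap.bext
          · ext x; exact (IsEmpty.false x).elim
          · ext x; exact (IsEmpty.false x).elim
          · rfl
        refine ⟨BiMap.pid Aex Afr hA, rfl, ?_⟩
        rw [e]
        exact rfl
      · set φ : X → X := fun x => if x ∈ Aex ∪ Afr then ψ x else x with hφdef
        set σ : X → X :=
          fun y => if y ∈ Bex ∪ Bfr then Function.invFunOn ψ (Aex ∪ Afr) y else y with hσdef
        have hφ1 : ∀ x ∈ Aex ∪ Afr, φ x = ψ x := fun x hx => if_pos hx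
        have hσ1 : ∀ y ∈ Bex ∪ Bfr, σ y = Function.invFunOn ψ (Aex ∪ Afr) y :=
          fun y hy => if_pos hy
        refine BiMap.glD_pid_of hA hB
          ⟨Aex, Afr, hA, φ, fun x hx => if_neg hx⟩
          ⟨Bex, Bfr, hB, σ, fun y hy => if_neg hy⟩
          rfl rfl rfl rfl ?_ ?_ ?_ ?_ ?_
        · intro x hx
          show φ x ∈ Bex
          rw [hφ1 x (Or.inl hx), ← h1]
          exact Set.mem_image_of_mem ψ hx
        · intro x hx
          show φ x ∈ Bfr
          rw [hφ1 x (Or.inr hx), ← h2]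
          exact Set.mem_image_of_mem ψ hx
        · intro x hx
          show σ (φ x) = x
          rw [hφ1 x hx, hσ1 _ (hbij.mapsTo hx)]
          exact hbij.injOn.leftInvOn_invFunOn hx
        · intro y hy
          have hy' : y ∈ ψ '' Aex := by rw [h1]; exact hy
          obtain ⟨a, ha, rfl⟩ := hy'
          have haS : a ∈ Aex ∪ Afr := Or.inl ha
          have hinva : Function.invFunOn ψ (Aex ∪ Afr) (ψ a) = a :=
            hbij.injOn.leftInvOn_invFunOn haS
          constructor
          · show σ (ψ a) ∈ Aex
            rw [hσ1 _ (Or.inl hy), hinva]; exact ha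
          · show φ (σ (ψ a)) = ψ a
            rw [hσ1 _ (Or.inl hy), hinva, hφ1 a haS]
        · intro y hy
          have hy' : y ∈ ψ '' Afr := by rw [h2]; exact hy
          obtain ⟨a, ha, rfl⟩ := hy'
          have haS : a ∈ Aex ∪ Afr := Or.inr ha
          have hinva : Function.invFunOn ψ (Aex ∪ Afr) (ψ a) = a :=
            hbij.injOn.leftInvOn_invFunOn haS
          constructor
          · show σ (ψ a) ∈ Afr
            rw [hσ1 _ (Or.inr hy), hinva]; exact ha
          · show φ (σ (ψ a)) = ψ a
            rw [hσ1 _ (Or.inr hy), hinva, hφ1 a haS]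
  refine ⟨main, fun hD => ?_⟩
  obtain ⟨ψ, hbij, h1, h2⟩ := main.mp hD
  constructor
  · rw [← h1]
    exact (Set.ncard_image_of_injOn (hbij.injOn.mono Set.subset_union_left)).symm
  · rw [← h2]
    exact (Set.ncard_image_of_injOn (hbij.injOn.mono Set.subset_union_right)).symm
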